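/- Let σ₁ < σ₂ be real numbers, let q : ℝ → ℝ be continuous on (σ₁,σ₂), and let ψ : ℝ → ℝ be three times continuously differentiable on (σ₁,σ₂) with ψ'(t) > 0 for all t ∈ (σ₁,σ₂), such that ψ' satisfies Kummer's equation relative to q on (σ₁,σ₂). Then every twice differentiable function y satisfying y'' + q·y = 0 on (σ₁,σ₂) can be written as y(t) = α·cos(ψ(t))/√(ψ'(t)) + β·sin(ψ(t))/√(ψ'(t)) for some real constants α and β; that is, the functions cos(ψ)/√(ψ') and sin(ψ)/√(ψ') form a basis of the space of solutions of y'' + q·y = 0 on (σ₁,σ₂). -/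

import Mathlib

open Real Set

noncomputable def phaseU (ψ : ℝ → ℝ) (c : ℝ) (t : ℝ) : ℝ :=
  Real.cos (ψ t + c) / Real.sqrt (deriv ψ t)

noncomputable def phaseD (ψ : ℝ → ℝ) (c : ℝ) (t : ℝ) : ℝ :=
  -Real.sin (ψ t + c) * Real.sqrt (deriv ψ t)
    - Real.cos (ψ t + c) * deriv (deriv ψ) t / (2 * deriv ψ t * Real.sqrt (deriv ψ t))

lemma phaseU_hasDerivAt {σ₁ σ₂ : ℝ} {ψ : ℝ → ℝ}
    (hψ : ContDiffOn ℝ 3 ψ (Ioo σ₁ σ₂))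
    (hpos : ∀ t ∈ Ioo σ₁ σ₂, 0 < deriv ψ t) (c : ℝ) {t : ℝ} (ht : t ∈ Ioo σ₁ σ₂) :
    HasDerivAt (phaseU ψ c) (phaseD ψ c t) t := by
  have hmem := isOpen_Ioo.mem_nhds ht
  have hP : HasDerivAt ψ (deriv ψ t) t :=
    (((hψ.differentiableOn (by norm_num)).differentiableAt hmem)).hasDerivAt
  have hp2 : ContDiffOn ℝ 2 (deriv ψ) (Ioo σ₁ σ₂) :=
    hψ.deriv_of_isOpen isOpen_Ioo (by norm_num)
  have hP1 : HasDerivAt (deriv ψ) (deriv (deriv ψ) t) t :=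
    ((hp2.differentiableOn (by norm_num)).differentiableAt hmem).hasDerivAt
  have hPt : 0 < deriv ψ t := hpos t ht
  have hs0 : Real.sqrt (deriv ψ t) ≠ 0 := by positivity
  have hsq : HasDerivAt (fun u => Real.sqrt (deriv ψ u))
      (deriv (deriv ψ) t / (2 * Real.sqrt (deriv ψ t))) t := hP1.sqrt hPt.ne'
  have hcos : HasDerivAt (fun u => Real.cos (ψ u + c))
      (-Real.sin (ψ t + c) * deriv ψ t) t := (hP.add_const c).cos
  have key := hcos.div hsq hs0
  have heq : (-Real.sin (ψ t + c) * deriv ψ t * Real.sqrt (deriv ψ t) -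
      Real.cos (ψ t + c) * (deriv (deriv ψ) t / (2 * Real.sqrt (deriv ψ t)))) /
        Real.sqrt (deriv ψ t) ^ 2 = phaseD ψ c t := by
    obtain ⟨s, hs⟩ : ∃ s, Real.sqrt (deriv ψ t) = s := ⟨_, rfl⟩
    have hs2 : deriv ψ t = s ^ 2 := by rw [← hs, Real.sq_sqrt hPt.le]
    have hsne : s ≠ 0 := hs ▸ hs0
    unfold phaseD
    rw [hs, hs2]
    field_simp
  exact heq ▸ key

lemma phaseD_hasDerivAt {σ₁ σ₂ : ℝ} {ψ q : ℝ → ℝ}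
    (hψ : ContDiffOn ℝ 3 ψ (Ioo σ₁ σ₂))
    (hpos : ∀ t ∈ Ioo σ₁ σ₂, 0 < deriv ψ t)
    (hkummer : ∀ t ∈ Ioo σ₁ σ₂,
      q t - (deriv ψ t) ^ 2 - (1 / 2) * (deriv (deriv (deriv ψ)) t / deriv ψ t)
        + (3 / 4) * (deriv (deriv ψ) t / deriv ψ t) ^ 2 = 0)
    (c : ℝ) {t : ℝ} (ht : t ∈ Ioo σ₁ σ₂) :
    HasDerivAt (phaseD ψ c) (-q t * phaseU ψ c t) t := by
  have hmem := isOpen_Ioo.mem_nhds ht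
  have hP : HasDerivAt ψ (deriv ψ t) t :=
    (((hψ.differentiableOn (by norm_num)).differentiableAt hmem)).hasDerivAt
  have hp2 : ContDiffOn ℝ 2 (deriv ψ) (Ioo σ₁ σ₂) :=
    hψ.deriv_of_isOpen isOpen_Ioo (by norm_num)
  have hp1 : ContDiffOn ℝ 1 (deriv (deriv ψ)) (Ioo σ₁ σ₂) :=
    hp2.deriv_of_isOpen isOpen_Ioo (by norm_num)
  have hP1 : HasDerivAt (deriv ψ) (deriv (deriv ψ) t) t :=
    ((hp2.differentiableOn (by norm_num)).differentiableAt hmem).hasDerivAt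
  have hP2 : HasDerivAt (deriv (deriv ψ)) (deriv (deriv (deriv ψ)) t) t :=
    ((hp1.differentiableOn (by norm_num)).differentiableAt hmem).hasDerivAt
  have hPt : 0 < deriv ψ t := hpos t ht
  have hs0 : Real.sqrt (deriv ψ t) ≠ 0 := by positivity
  have hsq : HasDerivAt (fun u => Real.sqrt (deriv ψ u))
      (deriv (deriv ψ) t / (2 * Real.sqrt (deriv ψ t))) t := hP1.sqrt hPt.ne'
  have hcos : HasDerivAt (fun u => Real.cos (ψ u + c))
      (-Real.sin (ψ t + c) * deriv ψ t) t := (hP.add_const c).cos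
  have hsin : HasDerivAt (fun u => Real.sin (ψ u + c))
      (Real.cos (ψ t + c) * deriv ψ t) t := (hP.add_const c).sin
  have hterm1 := hsin.neg.mul hsq
  have hnum := hcos.mul hP2
  have hden := (hP1.const_mul 2).mul hsq
  have hden0 : 2 * deriv ψ t * Real.sqrt (deriv ψ t) ≠ 0 := by positivity
  have hterm2 := hnum.div hden hden0
  have key := hterm1.sub hterm2
  have hk := hkummer t ht
  have hq' : q t = (deriv ψ t) ^ 2 + (1 / 2) * (deriv (deriv (deriv ψ)) t / deriv ψ t)
      - (3 / 4) * (deriv (deriv ψ) t / deriv ψ t) ^ 2 := by linarith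
  have heq : -(Real.cos (ψ t + c) * deriv ψ t) * Real.sqrt (deriv ψ t) +
        -Real.sin (ψ t + c) * (deriv (deriv ψ) t / (2 * Real.sqrt (deriv ψ t))) -
      ((-Real.sin (ψ t + c) * deriv ψ t * (deriv (deriv ψ) t) +
          Real.cos (ψ t + c) * deriv (deriv (deriv ψ)) t) *
            (2 * deriv ψ t * Real.sqrt (deriv ψ t)) -
        Real.cos (ψ t + c) * deriv (deriv ψ) t *
          (2 * deriv (deriv ψ) t * Real.sqrt (deriv ψ t) +
            2 * deriv ψ t * (deriv (deriv ψ) t / (2 * Real.sqrt (deriv ψ t))))) /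
        (2 * deriv ψ t * Real.sqrt (deriv ψ t)) ^ 2
      = -q t * phaseU ψ c t := by
    unfold phaseU
    rw [hq']
    obtain ⟨s, hs⟩ : ∃ s, Real.sqrt (deriv ψ t) = s := ⟨_, rfl⟩
    have hs2 : deriv ψ t = s ^ 2 := by rw [← hs, Real.sq_sqrt hPt.le]
    have hsne : s ≠ 0 := hs ▸ hs0
    rw [hs, hs2]
    field_simp
    ring
  have : HasDerivAt (fun u => -Real.sin (ψ u + c) * Real.sqrt (deriv ψ u) -
      Real.cos (ψ u + c) * deriv (deriv ψ) u / (2 * deriv ψ u * Real.sqrt (deriv ψ u)))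
      (-q t * phaseU ψ c t) t := heq ▸ key
  exact this

lemma phase_wronskian {ψ : ℝ → ℝ} {t : ℝ} (hPt : 0 < deriv ψ t) :
    phaseU ψ 0 t * phaseD ψ (-(π/2)) t - phaseU ψ (-(π/2)) t * phaseD ψ 0 t = 1 := by
  unfold phaseU phaseD
  have e : ψ t + -(π/2) = ψ t - π/2 := by ring
  rw [e, add_zero, Real.cos_sub_pi_div_two, Real.sin_sub_pi_div_two]
  obtain ⟨s, hs⟩ : ∃ s, Real.sqrt (deriv ψ t) = s := ⟨_, rfl⟩
  have hs2 : deriv ψ t = s ^ 2 := by rw [← hs, Real.sq_sqrt hPt.le]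
  have hsne : s ≠ 0 := by rw [← hs]; positivity
  rw [hs, hs2]
  have hpy := Real.sin_sq_add_cos_sq (ψ t)
  field_simp
  linear_combination (s * s * 2 * (deriv (deriv ψ) t) * 0 + (2 * s^4)) * hpy

lemma const_of_hasDerivAt_zero {σ₁ σ₂ : ℝ} {f : ℝ → ℝ}
    (hf : ∀ t ∈ Ioo σ₁ σ₂, HasDerivAt f 0 t) {a b : ℝ}
    (ha : a ∈ Ioo σ₁ σ₂) (hb : b ∈ Ioo σ₁ σ₂) : f a = f b := by
  apply (convex_Ioo σ₁ σ₂).is_const_of_fderivWithin_eq_zero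
    (fun t ht => ((hf t ht).differentiableAt).differentiableWithinAt) ?_ ha hb
  intro x hx
  have h := ((hf x hx).hasFDerivAt.hasFDerivWithinAt).fderivWithin
    ((uniqueDiffOn_Ioo σ₁ σ₂) x hx)
  rw [h]
  ext y
  simp

theorem phase_functions_give_basis_of_solutions (σ₁ σ₂ : ℝ) (hσ : σ₁ < σ₂) (q ψ : ℝ → ℝ)
    (hq : ContinuousOn q (Ioo σ₁ σ₂))
    (hψ : ContDiffOn ℝ 3 ψ (Ioo σ₁ σ₂))
    (hpos : ∀ t ∈ Ioo σ₁ σ₂, 0 < deriv ψ t)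
    (hkummer : ∀ t ∈ Ioo σ₁ σ₂,
      q t - (deriv ψ t) ^ 2 - (1 / 2) * (deriv (deriv (deriv ψ)) t / deriv ψ t)
        + (3 / 4) * (deriv (deriv ψ) t / deriv ψ t) ^ 2 = 0) :
    ∀ y : ℝ → ℝ,
      (∀ t ∈ Ioo σ₁ σ₂, DifferentiableAt ℝ y t ∧ DifferentiableAt ℝ (deriv y) t) →
      (∀ t ∈ Ioo σ₁ σ₂, deriv (deriv y) t + q t * y t = 0) →
      ∃ α β : ℝ, ∀ t ∈ Ioo σ₁ σ₂,
        y t = α * (Real.cos (ψ t) / Real.sqrt (deriv ψ t))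
            + β * (Real.sin (ψ t) / Real.sqrt (deriv ψ t)) := by
  intro y hy hode
  set t₀ : ℝ := (σ₁ + σ₂) / 2 with ht₀def
  have ht₀ : t₀ ∈ Ioo σ₁ σ₂ := ⟨by simp only [ht₀def]; linarith, by simp only [ht₀def]; linarith⟩
  -- the two "conserved quantities"
  set g₁ : ℝ → ℝ := fun t => y t * phaseD ψ (-(π/2)) t - deriv y t * phaseU ψ (-(π/2)) t with hg₁
  set g₂ : ℝ → ℝ := fun t => deriv y t * phaseU ψ 0 t - y t * phaseD ψ 0 t with hg₂
  have hgconst : ∀ c : ℝ, ∀ t ∈ Ioo σ₁ σ₂,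
      HasDerivAt (fun u => y u * phaseD ψ c u - deriv y u * phaseU ψ c u) 0 t := by
    intro c t ht
    have hY : HasDerivAt y (deriv y t) t := (hy t ht).1.hasDerivAt
    have hY' : HasDerivAt (deriv y) (deriv (deriv y) t) t := (hy t ht).2.hasDerivAt
    have hU := phaseU_hasDerivAt hψ hpos c ht
    have hD := phaseD_hasDerivAt hψ hpos hkummer c ht
    have key := (hY.mul hD).sub (hY'.mul hU)
    have hode' : deriv (deriv y) t = -q t * y t := by have := hode t ht; linarith
    have : deriv y t * phaseD ψ c t + y t * (-q t * phaseU ψ c t) -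
        (deriv (deriv y) t * phaseU ψ c t + deriv y t * phaseD ψ c t) = 0 := by
      rw [hode']; ring
    exact this ▸ key
  have h1 : ∀ t ∈ Ioo σ₁ σ₂, g₁ t = g₁ t₀ :=
    fun t ht => const_of_hasDerivAt_zero (hgconst (-(π/2))) ht ht₀
  have h2 : ∀ t ∈ Ioo σ₁ σ₂, g₂ t = g₂ t₀ := by
    intro t ht
    have := const_of_hasDerivAt_zero (hgconst 0) ht ht₀
    simp only [hg₂]
    linarith
  refine ⟨g₁ t₀, g₂ t₀, fun t ht => ?_⟩
  have hw := phase_wronskian (ψ := ψ) (hpos t ht)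
  have e1 := h1 t ht
  have e2 := h2 t ht
  have hUcos : phaseU ψ 0 t = Real.cos (ψ t) / Real.sqrt (deriv ψ t) := by
    unfold phaseU; rw [add_zero]
  have hUsin : phaseU ψ (-(π/2)) t = Real.sin (ψ t) / Real.sqrt (deriv ψ t) := by
    unfold phaseU
    rw [show ψ t + -(π/2) = ψ t - π/2 by ring, Real.cos_sub_pi_div_two]
  rw [← hUcos, ← hUsin]
  simp only [hg₁, hg₂] at e1 e2
  linear_combination (-(y t)) * hw + phaseU ψ 0 t * e1 + phaseU ψ (-(π/2)) t * e2
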